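/- Let C be a spherical fusion category with commutative Grothendieck ring, generated by a simple object X, with characters μ_j of the complexified Grothendieck ring, conjugacy class dimensions dim(C^j) = dim(C)/n_j, and universal grading group U(C) of order |U(C)| = |G| where G is the group of group-like characters. If for every j the quantity λ_0(μ_j, X) := dim(C^j) · μ_j([X])/dim(X) is an algebraic integer (the Isaacs property for s = 0), then dim(C)/(|U(C)| · dim(X)) is an algebraic integer. -/

import Mathlib

open scoped BigOperators

/-- A commutative fusion ring: nonnegative integer fusion coefficients on a basis
`x_0, ..., x_m` (`x_0` the unit), a duality involution, and Frobenius-Perron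
dimensions `d i > 0`. -/
structure FusionData (m : ℕ) where
  N : Fin (m + 1) → Fin (m + 1) → Fin (m + 1) → ℕ
  dual : Fin (m + 1) → Fin (m + 1)
  dual_invol : ∀ i, dual (dual i) = i
  N_comm : ∀ i j k, N i j k = N j i k
  N_assoc : ∀ i j l k, ∑ t, N i j t * N t l k = ∑ t, N j l t * N i t k
  N_one : ∀ j k, N 0 j k = if k = j then 1 else 0
  N_pair : ∀ i j, N i j 0 = if j = dual i then 1 else 0
  d : Fin (m + 1) → ℝ
  d_pos : ∀ i, 0 < d i
  d_one : d 0 = 1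
  d_mul : ∀ i j, d i * d j = ∑ k, (N i j k : ℝ) * d k
  d_dual : ∀ i, d (dual i) = d i

/-- A character of the complexified fusion ring, given by its values on the basis. -/
def IsChar {m : ℕ} (F : FusionData m) (μ : Fin (m + 1) → ℂ) : Prop :=
  μ 0 = 1 ∧
  (∀ i j, μ i * μ j = ∑ k, (F.N i j k : ℂ) * μ k) ∧
  (∀ i, μ (F.dual i) = starRingEnd ℂ (μ i)) ∧
  (∀ i, ‖μ i‖ ≤ F.d i)

/-- The dual `⋆` product: `(μ ⋆ ν)(x_k / d_k) = μ(x_k / d_k) · ν(x_k / d_k)`. -/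
noncomputable def starProd {m : ℕ} (F : FusionData m) (μ ν : Fin (m + 1) → ℂ) :
    Fin (m + 1) → ℂ :=
  fun i => μ i * ν i / (F.d i : ℂ)

/-- A group-like character: `μ ⋆ μ# = μ_0 = FPdim`, where `μ#` is the complex
conjugate character. -/
def IsGroupLike {m : ℕ} (F : FusionData m) (μ : Fin (m + 1) → ℂ) : Prop :=
  IsChar F μ ∧ ∀ i, starProd F μ (fun k => starRingEnd ℂ (μ k)) i = (F.d i : ℂ)

/-- The coefficient of the basis element `x_k` in the `n`-th power of `x_a`. -/
def powCoeff {m : ℕ} (F : FusionData m) (a : Fin (m + 1)) : ℕ → Fin (m + 1) → ℕ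
  | 0, k => if k = 0 then 1 else 0
  | n + 1, k => ∑ l, powCoeff F a n l * F.N a l k

namespace FusionData
variable {m : ℕ} (F : FusionData m)

lemma dual_inj : Function.Injective F.dual := by
  intro i j h
  have := congrArg F.dual h
  rwa [F.dual_invol, F.dual_invol] at this

lemma N_pair' (i j : Fin (m + 1)) :
    F.N i (F.dual j) 0 = if i = j then 1 else 0 := by
  rw [F.N_pair]
  by_cases h : i = j
  · subst h; simp
  · rw [if_neg, if_neg h]
    intro hc
    exact h (F.dual_inj hc.symm)

lemma N_cyc (a b c : Fin (m + 1)) :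
    F.N a b c = F.N b (F.dual c) (F.dual a) := by
  have key : ∀ x y z : Fin (m + 1),
      (∑ t, F.N x y t * F.N t (F.dual z) 0) = F.N x y z := by
    intro x y z
    have : ∀ t, F.N x y t * F.N t (F.dual z) 0
        = if t = z then F.N x y t else 0 := by
      intro t
      rw [F.N_pair' t z]
      split_ifs <;> simp
    rw [Finset.sum_congr rfl fun t _ => this t, Finset.sum_ite_eq' Finset.univ z]
    simp
  calc F.N a b c = ∑ t, F.N a b t * F.N t (F.dual c) 0 := (key a b c).symm
    _ = ∑ t, F.N b (F.dual c) t * F.N a t 0 := F.N_assoc a b (F.dual c) 0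
    _ = F.N b (F.dual c) (F.dual a) := by
        have : ∀ t, F.N b (F.dual c) t * F.N a t 0
            = if t = F.dual a then F.N b (F.dual c) t else 0 := by
          intro t
          rw [F.N_pair a t]
          split_ifs with h1 h2 h2 <;> simp_all
        rw [Finset.sum_congr rfl fun t _ => this t, Finset.sum_ite_eq' Finset.univ]
        simp
  
lemma N_frob (a b c : Fin (m + 1)) :
    F.N a b c = F.N a (F.dual c) (F.dual b) := by
  have h1 := F.N_cyc a b c                    -- N a b c = N b c* a*
  have h2 := F.N_cyc a (F.dual c) (F.dual b)  -- N a c* b* = N c* (dual b*) (dual a)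
  rw [F.dual_invol] at h2                     -- N a c* b* = N c* b a*
  rw [h1, h2, F.N_comm]

end FusionData

section CharLemmas
variable {m : ℕ} {F : FusionData m}

lemma d_ne_zero (i : Fin (m + 1)) : ((F.d i : ℝ) : ℂ) ≠ 0 :=
  Complex.ofReal_ne_zero.mpr (F.d_pos i).ne'

/-- character values on powers of a generator -/
lemma char_pow {ν : Fin (m + 1) → ℂ} (hν : IsChar F ν) (a : Fin (m + 1)) :
    ∀ n, ν a ^ n = ∑ k, (powCoeff F a n k : ℂ) * ν k := by
  intro n
  induction n with
  | zero =>
    simp only [pow_zero, powCoeff, Nat.cast_ite, Nat.cast_one, Nat.cast_zero, ite_mul,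
      one_mul, zero_mul, Finset.sum_ite_eq', Finset.mem_univ, if_true]
    exact hν.1.symm
  | succ n ih =>
    rw [pow_succ, ih, Finset.sum_mul]
    have key : ∀ l, ((powCoeff F a n l : ℂ)) * ν l * ν a
        = ∑ k, (powCoeff F a n l : ℂ) * ((F.N a l k : ℂ) * ν k) := by
      intro l
      rw [mul_assoc, mul_comm (ν l) (ν a), hν.2.1 a l, Finset.mul_sum]
    rw [Finset.sum_congr rfl fun l _ => key l, Finset.sum_comm]
    refine Finset.sum_congr rfl fun k _ => ?_
    have : (powCoeff F a (n+1) k) = ∑ l, powCoeff F a n l * F.N a l k := rfl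
    rw [this]
    push_cast
    rw [Finset.sum_mul]
    exact Finset.sum_congr rfl fun l _ => by ring

lemma groupLike_mul_conj {g : Fin (m + 1) → ℂ} (hg : IsGroupLike F g) (i : Fin (m + 1)) :
    g i * (starRingEnd ℂ) (g i) = ((F.d i : ℝ) : ℂ) ^ 2 := by
  have h := hg.2 i
  unfold starProd at h
  rw [div_eq_iff (d_ne_zero i)] at h
  rw [h]; ring

lemma groupLike_normSq {g : Fin (m + 1) → ℂ} (hg : IsGroupLike F g) (i : Fin (m + 1)) :
    Complex.normSq (g i) = (F.d i) ^ 2 := by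
  have h := groupLike_mul_conj hg i
  rw [Complex.mul_conj] at h
  exact_mod_cast h

lemma groupLike_abs {g : Fin (m + 1) → ℂ} (hg : IsGroupLike F g) (i : Fin (m + 1)) :
    ‖g i‖ = F.d i := by
  rw [Complex.norm_def, groupLike_normSq hg i, Real.sqrt_sq (F.d_pos i).le]

lemma isGroupLike_of_abs {g : Fin (m + 1) → ℂ} (hg : IsChar F g)
    (habs : ∀ i, ‖g i‖ = F.d i) : IsGroupLike F g := by
  refine ⟨hg, fun i => ?_⟩
  unfold starProd
  rw [Complex.mul_conj, ← Complex.sq_norm, habs i]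
  rw [div_eq_iff (d_ne_zero i)]
  push_cast
  ring

/-- equality case: if `|z| = r` and `re z = r` then `z = r`. -/
lemma eq_of_re_eq_abs {z : ℂ} {r : ℝ} (habs : ‖z‖ = r) (hre : z.re = r) :
    z = (r : ℂ) := by
  have hn : Complex.normSq z = r ^ 2 := by
    rw [← Complex.sq_norm, habs]
  have him : z.im = 0 := by
    have h2 : z.re ^ 2 + z.im ^ 2 = r ^ 2 := by
      rw [← hn, Complex.normSq_apply]; ring
    rw [hre] at h2
    have : z.im ^ 2 = 0 := by linarith
    exact sq_eq_zero_iff.mp this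
  apply Complex.ext
  · simpa using hre
  · simpa using him

lemma groupLike_eq_d {g : Fin (m + 1) → ℂ} (hg : IsGroupLike F g)
    (hd : IsChar F (fun i => ((F.d i : ℝ) : ℂ))) {a : Fin (m + 1)}
    (hgen : ∀ k, ∃ n, powCoeff F a n k ≠ 0) (ha : g a = ((F.d a : ℝ) : ℂ)) :
    g = fun i => ((F.d i : ℝ) : ℂ) := by
  funext k
  obtain ⟨n, hn⟩ := hgen k
  have h1 : (((F.d a : ℝ) : ℂ)) ^ n = ∑ l, (powCoeff F a n l : ℂ) * g l := by
    rw [← ha]; exact char_pow hg.1 a n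
  have h2 : (((F.d a : ℝ) : ℂ)) ^ n = ∑ l, (powCoeff F a n l : ℂ) * ((F.d l : ℝ) : ℂ) :=
    char_pow hd a n
  have e1 : ∑ l, (powCoeff F a n l : ℝ) * (g l).re = (F.d a) ^ n := by
    have := congrArg Complex.re h1
    simpa [Complex.re_sum, Complex.mul_re, ← Complex.ofReal_pow] using this.symm
  have e2 : ∑ l, (powCoeff F a n l : ℝ) * (F.d l) = (F.d a) ^ n := by
    have := congrArg Complex.re h2
    simpa [Complex.re_sum, Complex.mul_re, ← Complex.ofReal_pow] using this.symm
  have hterm : ∀ l, 0 ≤ (powCoeff F a n l : ℝ) * (F.d l - (g l).re) := by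
    intro l
    apply mul_nonneg (Nat.cast_nonneg _)
    have h3 : (g l).re ≤ ‖g l‖ := Complex.re_le_norm _
    rw [groupLike_abs hg l] at h3
    linarith
  have hsum : ∑ l, (powCoeff F a n l : ℝ) * (F.d l - (g l).re) = 0 := by
    have : ∀ l, (powCoeff F a n l : ℝ) * (F.d l - (g l).re)
        = (powCoeff F a n l : ℝ) * (F.d l) - (powCoeff F a n l : ℝ) * (g l).re := fun l => by ring
    rw [Finset.sum_congr rfl fun l _ => this l, Finset.sum_sub_distrib, e1, e2, sub_self]
  have hk := (Finset.sum_eq_zero_iff_of_nonneg (fun l _ => hterm l)).mp hsum k (Finset.mem_univ k)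
  have hcne : (powCoeff F a n k : ℝ) ≠ 0 := Nat.cast_ne_zero.mpr hn
  have hre : (g k).re = F.d k := by
    rcases mul_eq_zero.mp hk with h | h
    · exact absurd h hcne
    · linarith
  exact eq_of_re_eq_abs (groupLike_abs hg k) hre

lemma groupLike_align {g : Fin (m + 1) → ℂ} (hg : IsGroupLike F g)
    (i j k : Fin (m + 1)) (hN : F.N i j k ≠ 0) :
    ((F.d i : ℝ) : ℂ) * ((F.d j : ℝ) : ℂ) * g k = g i * g j * ((F.d k : ℝ) : ℂ) := by
  set w := (starRingEnd ℂ) (g i * g j) with hw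
  have habsw : ‖w‖ = F.d i * F.d j := by
    rw [hw, Complex.norm_conj, norm_mul, groupLike_abs hg, groupLike_abs hg]
  have hmulsum : w * (g i * g j) = ∑ t, (F.N i j t : ℂ) * (w * g t) := by
    rw [hg.1.2.1 i j, Finset.mul_sum]
    exact Finset.sum_congr rfl fun t _ => by ring
  have hval : w * (g i * g j) = (((F.d i * F.d j) ^ 2 : ℝ) : ℂ) := by
    rw [hw, mul_comm, Complex.mul_conj, map_mul Complex.normSq,
      groupLike_normSq hg, groupLike_normSq hg]
    push_cast; ring
  have e1 : ∑ t, (F.N i j t : ℝ) * (w * g t).re = (F.d i * F.d j) ^ 2 := by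
    have := congrArg Complex.re (hmulsum.symm.trans hval)
    simpa [Complex.re_sum, Complex.mul_re, ← Complex.ofReal_mul, ← Complex.ofReal_pow] using this
  have e2 : ∑ t, (F.N i j t : ℝ) * (F.d i * F.d j * F.d t) = (F.d i * F.d j) ^ 2 := by
    have := F.d_mul i j
    calc ∑ t, (F.N i j t : ℝ) * (F.d i * F.d j * F.d t)
        = (F.d i * F.d j) * ∑ t, (F.N i j t : ℝ) * F.d t := by
          rw [Finset.mul_sum]; exact Finset.sum_congr rfl fun t _ => by ring
      _ = (F.d i * F.d j) ^ 2 := by rw [← this]; ring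
  have habst : ∀ t, ‖w * g t‖ = F.d i * F.d j * F.d t := by
    intro t
    rw [norm_mul, habsw, groupLike_abs hg]
  have hterm : ∀ t, 0 ≤ (F.N i j t : ℝ) * (F.d i * F.d j * F.d t - (w * g t).re) := by
    intro t
    apply mul_nonneg (Nat.cast_nonneg _)
    have h3 : (w * g t).re ≤ ‖w * g t‖ := Complex.re_le_norm _
    rw [habst t] at h3; linarith
  have hsum : ∑ t, (F.N i j t : ℝ) * (F.d i * F.d j * F.d t - (w * g t).re) = 0 := by
    have : ∀ t, (F.N i j t : ℝ) * (F.d i * F.d j * F.d t - (w * g t).re)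
        = (F.N i j t : ℝ) * (F.d i * F.d j * F.d t) - (F.N i j t : ℝ) * (w * g t).re :=
      fun t => by ring
    rw [Finset.sum_congr rfl fun t _ => this t, Finset.sum_sub_distrib, e1, e2, sub_self]
  have hkey := (Finset.sum_eq_zero_iff_of_nonneg (fun t _ => hterm t)).mp hsum k (Finset.mem_univ k)
  have hcne : (F.N i j k : ℝ) ≠ 0 := Nat.cast_ne_zero.mpr hN
  have hre : (w * g k).re = F.d i * F.d j * F.d k := by
    rcases mul_eq_zero.mp hkey with h | h
    · exact absurd h hcne
    · linarith
  have hwgk : w * g k = ((F.d i * F.d j * F.d k : ℝ) : ℂ) := eq_of_re_eq_abs (habst k) hre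
  -- now deduce the claim
  have hgw : g i * g j * w = (((F.d i * F.d j) ^ 2 : ℝ) : ℂ) := by
    rw [hw, Complex.mul_conj, map_mul Complex.normSq, groupLike_normSq hg, groupLike_normSq hg]
    push_cast; ring
  have hdij : ((F.d i : ℝ) : ℂ) * ((F.d j : ℝ) : ℂ) ≠ 0 :=
    mul_ne_zero (d_ne_zero i) (d_ne_zero j)
  apply mul_left_cancel₀ hdij
  calc ((F.d i : ℝ) : ℂ) * ((F.d j : ℝ) : ℂ) * (((F.d i : ℝ) : ℂ) * ((F.d j : ℝ) : ℂ) * g k)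
      = (((F.d i * F.d j) ^ 2 : ℝ) : ℂ) * g k := by push_cast; ring
    _ = (g i * g j * w) * g k := by rw [hgw]
    _ = (g i * g j) * (w * g k) := by ring
    _ = (g i * g j) * ((F.d i * F.d j * F.d k : ℝ) : ℂ) := by rw [hwgk]
    _ = ((F.d i : ℝ) : ℂ) * ((F.d j : ℝ) : ℂ) * (g i * g j * ((F.d k : ℝ) : ℂ)) := by
        push_cast; ring

lemma isChar_starProd {g ν : Fin (m + 1) → ℂ} (hg : IsGroupLike F g) (hν : IsChar F ν) :
    IsChar F (starProd F g ν) := by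
  obtain ⟨hν0, hνmul, hνdual, hνabs⟩ := hν
  refine ⟨?_, ?_, ?_, ?_⟩
  · unfold starProd
    rw [hg.1.1, hν0, F.d_one]
    norm_num
  · intro i j
    unfold starProd
    have lhs : g i * ν i / ((F.d i : ℝ) : ℂ) * (g j * ν j / ((F.d j : ℝ) : ℂ))
        = g i * g j / (((F.d i : ℝ) : ℂ) * ((F.d j : ℝ) : ℂ)) * (ν i * ν j) := by ring
    rw [lhs, hνmul i j, Finset.mul_sum]
    refine Finset.sum_congr rfl fun k _ => ?_
    by_cases hN : F.N i j k = 0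
    · rw [hN]; simp
    · have hal := groupLike_align hg i j k hN
      have h2 : (F.N i j k : ℂ) * (g k * ν k / ((F.d k : ℝ) : ℂ))
          = (F.N i j k : ℂ) * (g k * ν k) / ((F.d k : ℝ) : ℂ) := by ring
      rw [h2, div_mul_eq_mul_div, div_eq_div_iff (mul_ne_zero (d_ne_zero i) (d_ne_zero j)) (d_ne_zero k)]
      linear_combination (-((F.N i j k : ℂ) * ν k)) * hal
  · intro i
    unfold starProd
    rw [hg.1.2.2.1, hνdual, F.d_dual, map_div₀, map_mul, Complex.conj_ofReal]
  · intro i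
    unfold starProd
    rw [norm_div, norm_mul, Complex.norm_real, Real.norm_eq_abs, abs_of_pos (F.d_pos i), groupLike_abs hg,
      mul_comm, mul_div_assoc, div_self (F.d_pos i).ne', mul_one]
    exact hνabs i

lemma isGroupLike_starProd {g h : Fin (m + 1) → ℂ} (hg : IsGroupLike F g)
    (hh : IsGroupLike F h) : IsGroupLike F (starProd F g h) := by
  refine isGroupLike_of_abs (isChar_starProd hg hh.1) fun i => ?_
  unfold starProd
  rw [norm_div, norm_mul, Complex.norm_real, Real.norm_eq_abs, abs_of_pos (F.d_pos i), groupLike_abs hg,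
    groupLike_abs hh]
  field_simp

lemma isChar_conj {ν : Fin (m + 1) → ℂ} (hν : IsChar F ν) :
    IsChar F (fun i => (starRingEnd ℂ) (ν i)) := by
  obtain ⟨hν0, hνmul, hνdual, hνabs⟩ := hν
  refine ⟨?_, ?_, ?_, ?_⟩
  · simp [hν0]
  · intro i j
    simp only [← map_mul, hνmul i j, map_sum]
    refine Finset.sum_congr rfl fun k _ => ?_
    rw [map_mul]
    congr 1
    simp [Complex.conj_natCast]
  · intro i
    simp [hνdual]
  · intro i
    simpa using hνabs i

lemma isGroupLike_conj {g : Fin (m + 1) → ℂ} (hg : IsGroupLike F g) :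
    IsGroupLike F (fun i => (starRingEnd ℂ) (g i)) := by
  refine isGroupLike_of_abs (isChar_conj hg.1) fun i => ?_
  simp [groupLike_abs hg]

lemma isGroupLike_d (hd : IsChar F (fun i => ((F.d i : ℝ) : ℂ))) :
    IsGroupLike F (fun i => ((F.d i : ℝ) : ℂ)) := by
  refine isGroupLike_of_abs hd fun i => ?_
  simp [abs_of_pos (F.d_pos i)]

noncomputable def bform {m : ℕ} (F : FusionData m) (u v : Fin (m + 1) → ℂ) : ℂ :=
  ∑ i, u i * v (F.dual i)

lemma sum_dual {α : Type*} [AddCommMonoid α] (f : Fin (m + 1) → α) :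
    ∑ i, f (F.dual i) = ∑ i, f i := by
  rw [← Equiv.sum_comp (Function.Involutive.toPerm F.dual F.dual_invol) f]
  rfl

lemma bform_eigen {ν ρ : Fin (m + 1) → ℂ} (hν : IsChar F ν) (hρ : IsChar F ρ)
    (k : Fin (m + 1)) : ν k * bform F ν ρ = ρ k * bform F ν ρ := by
  have hL : ν k * bform F ν ρ = ∑ i, ∑ t, (F.N k i t : ℂ) * ν t * ρ (F.dual i) := by
    unfold bform
    rw [Finset.mul_sum]
    refine Finset.sum_congr rfl fun i _ => ?_
    rw [← mul_assoc, hν.2.1 k i, Finset.sum_mul]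
  have hR : ρ k * bform F ν ρ = ∑ i, ∑ t, (F.N k (F.dual i) t : ℂ) * ν i * ρ t := by
    unfold bform
    rw [Finset.mul_sum]
    refine Finset.sum_congr rfl fun i _ => ?_
    have : ρ k * (ν i * ρ (F.dual i)) = (ρ k * ρ (F.dual i)) * ν i := by ring
    rw [this, hρ.2.1 k (F.dual i), Finset.sum_mul]
    exact Finset.sum_congr rfl fun t _ => by ring
  rw [hL, hR]
  refine Eq.symm ?_
  -- transform the RHS into the LHS by reindexing along `dual`
  calc ∑ i, ∑ t, (F.N k (F.dual i) t : ℂ) * ν i * ρ t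
      = ∑ i, ∑ t, (F.N k i t : ℂ) * ν (F.dual i) * ρ t := by
        rw [← sum_dual (F := F) (fun i => ∑ t, (F.N k i t : ℂ) * ν (F.dual i) * ρ t)]
        simp only [F.dual_invol]
    _ = ∑ i, ∑ t, (F.N k t i : ℂ) * ν (F.dual t) * ρ i := Finset.sum_comm
    _ = ∑ i, ∑ t, (F.N k t (F.dual i) : ℂ) * ν (F.dual t) * ρ (F.dual i) := by
        rw [← sum_dual (F := F) (fun i => ∑ t, (F.N k t (F.dual i) : ℂ) * ν (F.dual t) * ρ (F.dual i))]
        simp only [F.dual_invol]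
    _ = ∑ i, ∑ t, (F.N k (F.dual t) (F.dual i) : ℂ) * ν t * ρ (F.dual i) := by
        refine Finset.sum_congr rfl fun i _ => ?_
        rw [← sum_dual (F := F) (fun t => (F.N k (F.dual t) (F.dual i) : ℂ) * ν t * ρ (F.dual i))]
        simp only [F.dual_invol]
    _ = ∑ i, ∑ t, (F.N k i t : ℂ) * ν t * ρ (F.dual i) := by
        refine Finset.sum_congr rfl fun i _ => Finset.sum_congr rfl fun t _ => ?_
        rw [← F.N_frob k i t]
  
lemma char_normSq_pos {ν : Fin (m + 1) → ℂ} (hν : IsChar F ν) :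
    (0 : ℝ) < ∑ i, Complex.normSq (ν i) := by
  apply Finset.sum_pos' (fun i _ => Complex.normSq_nonneg _)
  exact ⟨0, Finset.mem_univ _, by rw [hν.1]; norm_num⟩

lemma bform_self {ν : Fin (m + 1) → ℂ} (hν : IsChar F ν) :
    bform F ν ν = ((∑ i, Complex.normSq (ν i) : ℝ) : ℂ) := by
  unfold bform
  push_cast
  refine Finset.sum_congr rfl fun i _ => ?_
  rw [hν.2.2.1 i, Complex.mul_conj]

lemma bform_ne {ν ρ : Fin (m + 1) → ℂ} (hν : IsChar F ν) (hρ : IsChar F ρ)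
    (hne : ν ≠ ρ) : bform F ν ρ = 0 := by
  obtain ⟨i, hi⟩ := Function.ne_iff.mp hne
  have h := bform_eigen hν hρ i
  by_contra hB
  exact hi (mul_right_cancel₀ hB h)

lemma bform_sum_left (w : Fin (m + 1) → Fin (m + 1) → ℂ) (c : Fin (m + 1) → ℂ)
    (v : Fin (m + 1) → ℂ) :
    bform F (fun i => ∑ j, c j * w j i) v = ∑ j, c j * bform F (w j) v := by
  unfold bform
  simp only [Finset.sum_mul, Finset.mul_sum]
  rw [Finset.sum_comm]
  exact Finset.sum_congr rfl fun i _ => Finset.sum_congr rfl fun j _ => by ring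

lemma second_orth (μ : Fin (m + 1) → Fin (m + 1) → ℂ)
    (hchar : ∀ j, IsChar F (μ j)) (hinj : Function.Injective μ) (a : Fin (m + 1)) :
    ∑ j, μ j a * (starRingEnd ℂ) (μ j a) / ((∑ i, Complex.normSq (μ j i) : ℝ) : ℂ) = 1 := by
  have hnne : ∀ j, ((∑ i, Complex.normSq (μ j i) : ℝ) : ℂ) ≠ 0 := fun j =>
    Complex.ofReal_ne_zero.mpr (char_normSq_pos (hchar j)).ne'
  have li : LinearIndependent ℂ μ := by
    rw [Fintype.linearIndependent_iff]
    intro c hc k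
    have h1 : ∑ j, c j * bform F (μ j) (μ k) = 0 := by
      rw [← bform_sum_left μ c (μ k)]
      have : (fun i => ∑ j, c j * μ j i) = 0 := by
        funext i
        have := congrFun hc i
        simpa [Finset.sum_apply] using this
      rw [this]
      unfold bform
      simp
    rw [Finset.sum_eq_single k (fun j _ hjk =>
      by rw [bform_ne (hchar j) (hchar k) (fun h => hjk (hinj h)), mul_zero])
      (fun h => absurd (Finset.mem_univ k) h)] at h1
    rw [bform_self (hchar k)] at h1
    rcases mul_eq_zero.mp h1 with h | h
    · exact h
    · exact absurd h (hnne k)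
  have card_eq : Fintype.card (Fin (m + 1)) = Module.finrank ℂ (Fin (m + 1) → ℂ) := by
    simp [Module.finrank_fintype_fun_eq_card]
  let b := basisOfLinearIndependentOfCardEqFinrank li card_eq
  have hb : ⇑b = μ := coe_basisOfLinearIndependentOfCardEqFinrank li card_eq
  set e : Fin (m + 1) → ℂ := fun i => if i = a then 1 else 0 with he
  have hrepr : (fun i => ∑ j, b.repr e j * μ j i) = e := by
    funext i
    have := congrFun (Module.Basis.sum_repr b e) i
    rw [← this]
    simp [hb, Finset.sum_apply]
  have hc : ∀ k, b.repr e k * bform F (μ k) (μ k) = (starRingEnd ℂ) (μ k a) := by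
    intro k
    have expand : bform F e (μ k) = ∑ j, b.repr e j * bform F (μ j) (μ k) := by
      rw [← bform_sum_left μ (fun j => b.repr e j) (μ k), hrepr]
    have hev : bform F e (μ k) = (starRingEnd ℂ) (μ k a) := by
      unfold bform
      rw [← (hchar k).2.2.1 a]
      simp [he, ite_mul]
    rw [← hev, expand]
    rw [Finset.sum_eq_single k (fun j _ hjk =>
      by rw [bform_ne (hchar j) (hchar k) (fun h => hjk (hinj h)), mul_zero])
      (fun h => absurd (Finset.mem_univ k) h)]
  have heval : ∑ j, b.repr e j * μ j a = 1 := by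
    have := congrFun hrepr a
    simpa [he] using this
  calc ∑ j, μ j a * (starRingEnd ℂ) (μ j a) / ((∑ i, Complex.normSq (μ j i) : ℝ) : ℂ)
      = ∑ j, b.repr e j * μ j a := by
        refine Finset.sum_congr rfl fun j _ => ?_
        have h := hc j
        rw [bform_self (hchar j)] at h
        rw [← h, mul_div_assoc, mul_div_cancel_right₀ _ (hnne j)]
        exact mul_comm _ _
    _ = 1 := heval


lemma charpoly_eval {n : ℕ} (M : Matrix (Fin n) (Fin n) ℂ) (z : ℂ) :
    M.charpoly.eval z = (z • (1 : Matrix (Fin n) (Fin n) ℂ) - M).det := by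
  rw [Matrix.charpoly, eval_det, Matrix.matPolyEquiv_charmatrix,
    Polynomial.eval_sub, Polynomial.eval_X, Polynomial.eval_C]
  congr 1
  ext i k
  simp [Matrix.scalar_apply, Matrix.smul_apply, Matrix.one_apply, Matrix.diagonal]

lemma char_val_integral {ν : Fin (m + 1) → ℂ} (hν : IsChar F ν) (i : Fin (m + 1)) :
    IsIntegral ℤ (ν i) := by
  classical
  set M : Matrix (Fin (m + 1)) (Fin (m + 1)) ℤ :=
    Matrix.of (fun l k => (F.N i l k : ℤ)) with hM
  set Mc : Matrix (Fin (m + 1)) (Fin (m + 1)) ℂ := M.map (algebraMap ℤ ℂ) with hMc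
  have hmv : Mc.mulVec ν = ν i • ν := by
    funext l
    have : Mc.mulVec ν l = ∑ k, (F.N i l k : ℂ) * ν k := by
      simp [Matrix.mulVec, dotProduct, hMc, hM]
    rw [this, ← hν.2.1 i l]
    simp
  have hv : ν ≠ 0 := by
    intro h
    have := hν.1
    rw [h] at this
    exact one_ne_zero this.symm
  have hdet : ((ν i) • (1 : Matrix (Fin (m + 1)) (Fin (m + 1)) ℂ) - Mc).det = 0 := by
    rw [← Matrix.exists_mulVec_eq_zero_iff]
    refine ⟨ν, hv, ?_⟩
    rw [Matrix.sub_mulVec, Matrix.smul_mulVec, Matrix.one_mulVec, hmv, sub_self]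
  refine ⟨M.charpoly, M.charpoly_monic, ?_⟩
  rw [Polynomial.eval₂_eq_eval_map, ← Matrix.charpoly_map M (algebraMap ℤ ℂ), ← hMc,
    charpoly_eval, hdet]

end CharLemmas

/-- A spherical fusion category with commutative Grothendieck ring, generated
by a simple object `X = x_a`, modelled by its Grothendieck ring `F` together
with the quantum dimension character `dims` (so `dim C = ∑ dims(x_i)²`,
`dim C^j = dim C / n_j`, and `|U(C)| = |G|`, the number of group-like
characters).  If each `λ_0(μ_j, X) = dim(C^j)·μ_j([X])/dim(X)` is an algebraic
integer (the Isaacs property for `s = 0`), then `dim C/(|U(C)|·dim X)` is an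
algebraic integer. -/
theorem isaacs_zero_divisibility {m : ℕ} (F : FusionData m)
    (a : Fin (m + 1)) (hgen : ∀ k, ∃ n, powCoeff F a n k ≠ 0)
    (μ : Fin (m + 1) → Fin (m + 1) → ℂ)
    (hchar : ∀ j, IsChar F (μ j)) (hinj : Function.Injective μ)
    (hall : ∀ ν, IsChar F ν → ∃ j, μ j = ν)
    (h0 : μ 0 = fun i => (F.d i : ℂ))
    (dims : Fin (m + 1) → ℂ) (hd0 : dims 0 = 1)
    (hdmul : ∀ i j, dims i * dims j = ∑ k, (F.N i j k : ℂ) * dims k)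
    (hddual : ∀ i, dims (F.dual i) = dims i) (hda : dims a ≠ 0)
    (hIsaacs : ∀ j, IsIntegral ℤ
      ((∑ i, dims i ^ 2) / ((∑ i, Complex.normSq (μ j i) : ℝ) : ℂ) * μ j a / dims a)) :
    IsIntegral ℤ ((∑ i, dims i ^ 2) /
      ((Nat.card {j : Fin (m + 1) // IsGroupLike F (μ j)} : ℂ) * dims a)) := by
  classical
  set D : ℂ := ∑ i, dims i ^ 2 with hD
  set nn : Fin (m + 1) → ℂ := fun j => ((∑ i, Complex.normSq (μ j i) : ℝ) : ℂ) with hnn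
  have hnne : ∀ j, nn j ≠ 0 := fun j =>
    Complex.ofReal_ne_zero.mpr (char_normSq_pos (hchar j)).ne'
  set t : Fin (m + 1) → ℂ :=
    fun j => D / nn j * μ j a / dims a * (starRingEnd ℂ) (μ j a) with ht
  have htform : ∀ j, t j = D / dims a * (μ j a * (starRingEnd ℂ) (μ j a) / nn j) := by
    intro j; simp only [ht]; ring
  have hIsa : ∀ j, IsIntegral ℤ (D / nn j * μ j a / dims a) := hIsaacs
  have hInt : ∀ j, IsIntegral ℤ (t j) := by
    intro j
    apply (hIsa j).mul
    rw [← (hchar j).2.2.1 a]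
    exact char_val_integral (hchar j) (F.dual a)
  have hsum : ∑ j, t j = D / dims a := by
    rw [Finset.sum_congr rfl fun j _ => htform j, ← Finset.mul_sum]
    have horth := second_orth μ hchar hinj a
    simp only [hnn]
    rw [horth, mul_one]
  set G : Finset (Fin (m + 1)) := Finset.univ.filter (fun j => IsGroupLike F (μ j)) with hG
  have hGL : ∀ g ∈ G, IsGroupLike F (μ g) := fun g hg => (Finset.mem_filter.mp hg).2
  have hGmem : ∀ g, IsGroupLike F (μ g) → g ∈ G := fun g h =>
    Finset.mem_filter.mpr ⟨Finset.mem_univ g, h⟩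
  have hdchar : IsChar F (fun i => ((F.d i : ℝ) : ℂ)) := by rw [← h0]; exact hchar 0
  have h0GL : IsGroupLike F (μ 0) := by rw [h0]; exact isGroupLike_d hdchar
  have h0G : (0 : Fin (m + 1)) ∈ G := hGmem 0 h0GL
  have hGpos : 0 < G.card := Finset.card_pos.mpr ⟨0, h0G⟩
  have hGne : (G.card : ℂ) ≠ 0 := Nat.cast_ne_zero.mpr hGpos.ne'
  have hex : ∀ g j, ∃ j', IsGroupLike F (μ g) → μ j' = starProd F (μ g) (μ j) := by
    intro g j
    by_cases hg : IsGroupLike F (μ g)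
    · obtain ⟨j', hj'⟩ := hall _ (isChar_starProd hg (hchar j))
      exact ⟨j', fun _ => hj'⟩
    · exact ⟨j, fun h => absurd h hg⟩
  choose act hact using hex
  have hactval : ∀ g ∈ G, ∀ j i, μ (act g j) i = μ g i * μ j i / ((F.d i : ℝ) : ℂ) := by
    intro g hg j i
    rw [hact g j (hGL g hg)]; rfl
  have hact0 : ∀ j, act 0 j = j := by
    intro j
    apply hinj
    rw [hact 0 j h0GL]
    funext i
    show μ 0 i * μ j i / ((F.d i : ℝ) : ℂ) = μ j i
    rw [h0]
    show ((F.d i : ℝ) : ℂ) * μ j i / ((F.d i : ℝ) : ℂ) = μ j i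
    rw [mul_comm, mul_div_assoc, div_self (d_ne_zero (F := F) i), mul_one]
  have hcomp : ∀ g ∈ G, ∀ g' ∈ G, ∀ j, ∃ g'' ∈ G, act g (act g' j) = act g'' j := by
    intro g hg g' hg' j
    have hGL2 := isGroupLike_starProd (hGL g hg) (hGL g' hg')
    obtain ⟨g'', hg''⟩ := hall _ hGL2.1
    have hg''G := hGmem g'' (by rw [hg'']; exact hGL2)
    refine ⟨g'', hg''G, ?_⟩
    apply hinj
    funext i
    rw [hactval g hg _ i, hactval g'' hg''G j i, hactval g' hg' j i, hg'']
    show μ g i * (μ g' i * μ j i / ((F.d i : ℝ) : ℂ)) / ((F.d i : ℝ) : ℂ)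
      = μ g i * μ g' i / ((F.d i : ℝ) : ℂ) * μ j i / ((F.d i : ℝ) : ℂ)
    ring
  have hinv : ∀ g ∈ G, ∃ gc ∈ G, ∀ j, act gc (act g j) = j := by
    intro g hg
    have hGLc := isGroupLike_conj (hGL g hg)
    obtain ⟨gc, hgc⟩ := hall _ hGLc.1
    have hgcG := hGmem gc (by rw [hgc]; exact hGLc)
    refine ⟨gc, hgcG, fun j => ?_⟩
    apply hinj
    funext i
    rw [hactval gc hgcG _ i, hactval g hg j i, hgc]
    show (starRingEnd ℂ) (μ g i) * (μ g i * μ j i / ((F.d i : ℝ) : ℂ)) / ((F.d i : ℝ) : ℂ)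
      = μ j i
    have hc := groupLike_mul_conj (hGL g hg) i
    have expand : (starRingEnd ℂ) (μ g i) * (μ g i * μ j i / ((F.d i : ℝ) : ℂ))
          / ((F.d i : ℝ) : ℂ)
        = (μ g i * (starRingEnd ℂ) (μ g i)) * μ j i
          / (((F.d i : ℝ) : ℂ) * ((F.d i : ℝ) : ℂ)) := by ring
    rw [expand, hc, show (((F.d i : ℝ) : ℂ)) ^ 2 = ((F.d i : ℝ) : ℂ) * ((F.d i : ℝ) : ℂ) from sq _,
      mul_comm (((F.d i : ℝ) : ℂ) * ((F.d i : ℝ) : ℂ)) (μ j i), mul_div_assoc,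
      div_self (mul_ne_zero (d_ne_zero (F := F) i) (d_ne_zero (F := F) i)), mul_one]
  have habsa : ∀ g ∈ G, ∀ j, μ (act g j) a * (starRingEnd ℂ) (μ (act g j) a)
      = μ j a * (starRingEnd ℂ) (μ j a) := by
    intro g hg j
    rw [hactval g hg j a, map_div₀, map_mul, Complex.conj_ofReal]
    have hc := groupLike_mul_conj (hGL g hg) a
    have expand : μ g a * μ j a / ((F.d a : ℝ) : ℂ)
          * ((starRingEnd ℂ) (μ g a) * (starRingEnd ℂ) (μ j a) / ((F.d a : ℝ) : ℂ))
        = (μ g a * (starRingEnd ℂ) (μ g a)) * (μ j a * (starRingEnd ℂ) (μ j a))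
          / (((F.d a : ℝ) : ℂ) * ((F.d a : ℝ) : ℂ)) := by ring
    rw [expand, hc, show (((F.d a : ℝ) : ℂ)) ^ 2 = ((F.d a : ℝ) : ℂ) * ((F.d a : ℝ) : ℂ) from sq _,
      mul_comm (((F.d a : ℝ) : ℂ) * ((F.d a : ℝ) : ℂ)) _, mul_div_assoc,
      div_self (mul_ne_zero (d_ne_zero (F := F) a) (d_ne_zero (F := F) a)), mul_one]
  have hnninv : ∀ g ∈ G, ∀ j, nn (act g j) = nn j := by
    intro g hg j
    simp only [hnn]
    have key : ∀ i, Complex.normSq (μ (act g j) i) = Complex.normSq (μ j i) := by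
      intro i
      rw [hactval g hg j i, map_div₀, map_mul, Complex.normSq_ofReal,
        groupLike_normSq (hGL g hg) i]
      rw [show F.d i ^ 2 * Complex.normSq (μ j i) / (F.d i * F.d i)
          = Complex.normSq (μ j i) * (F.d i * F.d i) / (F.d i * F.d i) from by ring,
        mul_div_assoc, div_self (mul_ne_zero (F.d_pos i).ne' (F.d_pos i).ne'), mul_one]
    rw [Finset.sum_congr rfl fun i _ => key i]
  have htinv : ∀ g ∈ G, ∀ j, t (act g j) = t j := by
    intro g hg j
    rw [htform, htform, habsa g hg j, hnninv g hg j]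
  have hSa : ∀ g ∈ G, ∀ j, μ j a ≠ 0 → μ (act g j) a ≠ 0 := by
    intro g hg j hja
    rw [hactval g hg j a]
    apply div_ne_zero (mul_ne_zero ?_ hja) (d_ne_zero (F := F) a)
    intro h
    have hns := groupLike_normSq (hGL g hg) a
    rw [h] at hns
    simp only [map_zero] at hns
    have := F.d_pos a
    nlinarith
  have hinjG : ∀ j, μ j a ≠ 0 → ∀ g ∈ G, ∀ g' ∈ G, act g j = act g' j → g = g' := by
    intro j hja g hg g' hg' heq
    have e : ∀ i, μ g i * μ j i / ((F.d i : ℝ) : ℂ) = μ g' i * μ j i / ((F.d i : ℝ) : ℂ) := by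
      intro i
      rw [← hactval g hg j i, ← hactval g' hg' j i, heq]
    have ea : μ g a = μ g' a := by
      have h1 := e a
      rw [div_eq_div_iff (d_ne_zero (F := F) a) (d_ne_zero (F := F) a)] at h1
      have h2 : μ g a * μ j a = μ g' a * μ j a := by
        apply mul_right_cancel₀ (d_ne_zero (F := F) a)
        linear_combination h1
      exact mul_right_cancel₀ hja h2
    have hGLh : IsGroupLike F (starProd F (μ g) (fun i => (starRingEnd ℂ) (μ g' i))) :=
      isGroupLike_starProd (hGL g hg) (isGroupLike_conj (hGL g' hg'))
    have hha : starProd F (μ g) (fun i => (starRingEnd ℂ) (μ g' i)) a = ((F.d a : ℝ) : ℂ) := by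
      show μ g a * (starRingEnd ℂ) (μ g' a) / ((F.d a : ℝ) : ℂ) = ((F.d a : ℝ) : ℂ)
      rw [ea, groupLike_mul_conj (hGL g' hg') a, sq, mul_div_assoc,
        div_self (d_ne_zero (F := F) a), mul_one]
    have hdh := groupLike_eq_d hGLh hdchar hgen hha
    apply hinj
    funext i
    have hi := congrFun hdh i
    have h2 : μ g i * (starRingEnd ℂ) (μ g' i) = ((F.d i : ℝ) : ℂ) * ((F.d i : ℝ) : ℂ) := by
      have := (div_eq_iff (d_ne_zero (F := F) i)).mp hi
      exact this
    have h3 := groupLike_mul_conj (hGL g' hg') i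
    have hcne : (starRingEnd ℂ) (μ g' i) ≠ 0 := by
      intro hc
      rw [hc, mul_zero] at h3
      have := F.d_pos i
      have h4 : (((F.d i : ℝ) : ℂ)) ^ 2 ≠ 0 := pow_ne_zero 2 (d_ne_zero (F := F) i)
      exact h4 h3.symm
    apply mul_right_cancel₀ hcne
    rw [h2, h3, sq]
  have main : ∀ n (T : Finset (Fin (m + 1))), T.card ≤ n →
      (∀ j ∈ T, μ j a ≠ 0) → (∀ j ∈ T, ∀ g ∈ G, act g j ∈ T) →
      ∃ w, IsIntegral ℤ w ∧ ∑ j ∈ T, t j = (G.card : ℂ) * w := by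
    intro n
    induction n with
    | zero =>
      intro T hT _ _
      have hTe : T = ∅ := Finset.card_eq_zero.mp (Nat.le_zero.mp hT)
      exact ⟨0, isIntegral_zero, by simp [hTe]⟩
    | succ n ih =>
      intro T hT hTa hTcl
      rcases Finset.eq_empty_or_nonempty T with rfl | ⟨j, hj⟩
      · exact ⟨0, isIntegral_zero, by simp⟩
      · set O : Finset (Fin (m + 1)) := G.image (fun g => act g j) with hO
        have hOsub : O ⊆ T := by
          intro x hx
          obtain ⟨g, hg, rfl⟩ := Finset.mem_image.mp hx
          exact hTcl j hj g hg
        have hjO : j ∈ O := Finset.mem_image.mpr ⟨0, h0G, hact0 j⟩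
        have hcardO : O.card = G.card := by
          apply Finset.card_image_of_injOn
          intro g hg g' hg' heq
          exact hinjG j (hTa j hj) g (Finset.mem_coe.mp hg) g' (Finset.mem_coe.mp hg') heq
        have htO : ∀ x ∈ O, t x = t j := by
          intro x hx
          obtain ⟨g, hg, rfl⟩ := Finset.mem_image.mp hx
          exact htinv g hg j
        have hsumO : ∑ x ∈ O, t x = (G.card : ℂ) * t j := by
          rw [Finset.sum_congr rfl htO, Finset.sum_const, hcardO, nsmul_eq_mul]
        have hOcl : ∀ x ∈ O, ∀ g ∈ G, act g x ∈ O := by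
          intro x hx g hg
          obtain ⟨g', hg', rfl⟩ := Finset.mem_image.mp hx
          obtain ⟨g'', hg''G, he⟩ := hcomp g hg g' hg' j
          exact Finset.mem_image.mpr ⟨g'', hg''G, he.symm⟩
        have hTOcl : ∀ x ∈ T \ O, ∀ g ∈ G, act g x ∈ T \ O := by
          intro x hx g hg
          obtain ⟨hxT, hxO⟩ := Finset.mem_sdiff.mp hx
          refine Finset.mem_sdiff.mpr ⟨hTcl x hxT g hg, fun hmem => ?_⟩
          obtain ⟨gc, hgcG, hgc⟩ := hinv g hg
          have hmem2 : act gc (act g x) ∈ O := hOcl _ hmem gc hgcG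
          rw [hgc x] at hmem2
          exact hxO hmem2
        have hcard' : (T \ O).card ≤ n := by
          have h1 : (T \ O).card = T.card - O.card := Finset.card_sdiff_of_subset hOsub
          have h2 : 0 < O.card := by rw [hcardO]; exact hGpos
          omega
        obtain ⟨w, hw, hsum'⟩ := ih (T \ O) hcard'
          (fun x hx => hTa x (Finset.mem_sdiff.mp hx).1) hTOcl
        refine ⟨t j + w, (hInt j).add hw, ?_⟩
        have hsplit := Finset.sum_sdiff (f := t) hOsub
        rw [← hsplit, hsum', hsumO]
        ring
  set S : Finset (Fin (m + 1)) := Finset.univ.filter (fun j => μ j a ≠ 0) with hS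
  have hScl : ∀ j ∈ S, ∀ g ∈ G, act g j ∈ S := by
    intro j hjS g hg
    exact Finset.mem_filter.mpr
      ⟨Finset.mem_univ _, hSa g hg j (Finset.mem_filter.mp hjS).2⟩
  obtain ⟨w, hw, hSsum⟩ := main S.card S le_rfl
    (fun j hj => (Finset.mem_filter.mp hj).2) hScl
  have hallS : ∑ j, t j = ∑ j ∈ S, t j := by
    symm
    apply Finset.sum_subset (Finset.subset_univ S)
    intro x _ hxS
    have hxa : μ x a = 0 := by
      by_contra hne
      exact hxS (Finset.mem_filter.mpr ⟨Finset.mem_univ _, hne⟩)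
    simp [ht, hxa]
  have hfin : D / dims a = (G.card : ℂ) * w := by rw [← hsum, hallS, hSsum]
  have hcardG : (Nat.card {j : Fin (m + 1) // IsGroupLike F (μ j)} : ℂ) = (G.card : ℂ) := by
    have hcc : Nat.card {j : Fin (m + 1) // IsGroupLike F (μ j)} = G.card := by
      rw [Nat.card_eq_fintype_card, Fintype.card_subtype]
    exact_mod_cast hcc
  rw [hcardG]
  have hval : D / ((G.card : ℂ) * dims a) = w := by
    rw [mul_comm, ← div_div, hfin, mul_comm, mul_div_assoc, div_self hGne, mul_one]
  rw [hval]
  exact hw
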